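/- The class of rooted CQs is not rewritable to max unions of CQs for DL-Lite_core^bag: there exist a rooted CQ q(x) and a DL-Lite_core TBox T such that for every max union of CQs q'(x) = q₁(x) ∨ … ∨ q_n(x) there is a bag ABox A with ⟨T,A⟩ satisfiable and q^{⟨T,A⟩} ≠ q'^{C(⟨∅,A⟩)}. In particular, this is witnessed by T = {A ⊑ ∃R, ∃R⁻ ⊑ B} and q(x) = ∃y. R(x,y) ∧ B(y), with counterexample ABox A containing A(a) with multiplicity 3, R(a,b) with multiplicity 2, and B(b) with multiplicity 3. -/

import Mathlib

/-!
Common formalization of the bag semantics of DL-Lite ontologies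
(Nikolaou et al., "The Bag Semantics of Ontology-Based Data Access").
-/

open scoped Classical

noncomputable section

/-- Individuals (constants). -/
abbrev Ind : Type := ℕ
/-- Variables. -/
abbrev Var : Type := ℕ
/-- Atomic concepts (unary predicates). -/
abbrev AtomicConcept : Type := ℕ
/-- Atomic roles (binary predicates). -/
abbrev AtomicRole : Type := ℕ

/-- A role is an atomic role or its inverse. -/
inductive Role where
  | atomic : AtomicRole → Role
  | inv : AtomicRole → Role
  deriving DecidableEq

/-- A concept is an atomic concept or `∃R` for a role `R`. -/
inductive DLConcept where
  | atomic : AtomicConcept → DLConcept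
  | ex : Role → DLConcept
  deriving DecidableEq

/-- TBox axioms: inclusions and disjointness axioms between concepts or roles. -/
inductive TBoxAxiom where
  | cIncl : DLConcept → DLConcept → TBoxAxiom
  | rIncl : Role → Role → TBoxAxiom
  | cDisj : DLConcept → DLConcept → TBoxAxiom
  | rDisj : Role → Role → TBoxAxiom
  deriving DecidableEq

/-- A DL-Lite_R TBox: a finite set of TBox axioms. -/
abbrev TBox : Type := Finset TBoxAxiom

/-- A DL-Lite_core TBox: only concept inclusions and concept disjointness axioms. -/
def TBox.IsCore (T : TBox) : Prop :=
  ∀ ax ∈ T, (∃ C D, ax = TBoxAxiom.cIncl C D) ∨ (∃ C D, ax = TBoxAxiom.cDisj C D)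

/-- ABox assertions. -/
inductive Assertion where
  | conceptA : AtomicConcept → Ind → Assertion
  | roleA : AtomicRole → Ind → Ind → Assertion
  deriving DecidableEq

/-- A bag ABox: a finite bag of assertions (represented as a multiset). -/
abbrev BagABox : Type := Multiset Assertion

/-- Multiplicity of an assertion in a bag ABox, as an extended natural. -/
def BagABox.mult (A : BagABox) (s : Assertion) : ℕ∞ := (A.count s : ℕ∞)

/-- Sum of an arbitrary family of extended naturals. -/
def bagSum {α : Type*} (f : α → ℕ∞) : ℕ∞ := ⨆ s : Finset α, ∑ x ∈ s, f x

/-- A bag interpretation. -/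
structure BagInterp : Type 1 where
  Δ : Type
  dne : Nonempty Δ
  indMap : Ind → Δ
  indInj : Function.Injective indMap
  cI : AtomicConcept → Δ → ℕ∞
  rI : AtomicRole → Δ → Δ → ℕ∞

/-- Extension of the interpretation function to roles. -/
def BagInterp.roleMult (I : BagInterp) : Role → I.Δ → I.Δ → ℕ∞
  | Role.atomic P => fun u v => I.rI P u v
  | Role.inv P => fun u v => I.rI P v u

/-- Extension of the interpretation function to concepts. -/
def BagInterp.conceptMult (I : BagInterp) : DLConcept → I.Δ → ℕ∞
  | DLConcept.atomic A => fun u => I.cI A u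
  | DLConcept.ex R => fun u => bagSum (fun v => I.roleMult R u v)

/-- Multiplicity of an assertion in a bag interpretation. -/
def BagInterp.assertMult (I : BagInterp) : Assertion → ℕ∞
  | Assertion.conceptA A a => I.cI A (I.indMap a)
  | Assertion.roleA P a b => I.rI P (I.indMap a) (I.indMap b)

/-- Satisfaction of a TBox axiom by a bag interpretation. -/
def BagInterp.SatisfiesAx (I : BagInterp) : TBoxAxiom → Prop
  | TBoxAxiom.cIncl C D => ∀ u, I.conceptMult C u ≤ I.conceptMult D u
  | TBoxAxiom.rIncl R S => ∀ u v, I.roleMult R u v ≤ I.roleMult S u v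
  | TBoxAxiom.cDisj C D => ∀ u, min (I.conceptMult C u) (I.conceptMult D u) = 0
  | TBoxAxiom.rDisj R S => ∀ u v, min (I.roleMult R u v) (I.roleMult S u v) = 0

/-- A DL-Lite^bag ontology. -/
structure Ontology : Type where
  tbox : TBox
  abox : BagABox

/-- `I` is a bag model of the ontology `K`. -/
def BagInterp.IsModel (I : BagInterp) (K : Ontology) : Prop :=
  (∀ ax ∈ K.tbox, I.SatisfiesAx ax) ∧
  ∀ s : Assertion, BagABox.mult K.abox s ≤ I.assertMult s

/-- Satisfiability of an ontology under bag semantics. -/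
def Ontology.Satisfiable (K : Ontology) : Prop := ∃ I : BagInterp, I.IsModel K

/- ## Conjunctive queries -/

/-- Terms: variables or individuals. -/
inductive Term where
  | var : Var → Term
  | ind : Ind → Term
  deriving DecidableEq

def Term.varsOf : Term → List Var
  | Term.var v => [v]
  | Term.ind _ => []

def Term.indsOf : Term → List Ind
  | Term.var _ => []
  | Term.ind a => [a]

/-- Query atoms: concept atoms, role atoms, and equalities. -/
inductive QAtom where
  | conceptAt : AtomicConcept → Term → QAtom
  | roleAt : AtomicRole → Term → Term → QAtom
  | eqAt : Var → Term → QAtom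
  deriving DecidableEq

def QAtom.terms : QAtom → List Term
  | QAtom.conceptAt _ t => [t]
  | QAtom.roleAt _ t₁ t₂ => [t₁, t₂]
  | QAtom.eqAt z t => [Term.var z, t]

def QAtom.vars : QAtom → List Var
  | QAtom.conceptAt _ t => t.varsOf
  | QAtom.roleAt _ t₁ t₂ => t₁.varsOf ++ t₂.varsOf
  | QAtom.eqAt z t => z :: t.varsOf

/-- A conjunctive query `q(x) = ∃y. φ(x,y)`: a tuple of answer variables,
a tuple of existential variables, and a conjunction (list, i.e. allowing
repetitions) of atoms. -/
structure CQ : Type where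
  answerVars : List Var
  existVars : List Var
  atoms : List QAtom

def CQ.vars (q : CQ) : List Var := q.answerVars ++ q.existVars

/-- Value of a term under a valuation of the variables. -/
def termVal (I : BagInterp) (f : Var → I.Δ) : Term → I.Δ
  | Term.var v => f v
  | Term.ind a => I.indMap a

/-- Multiplicity contributed by an atom under a valuation: for predicate atoms the
multiplicity of the image tuple, for equalities the indicator of satisfaction. -/
def QAtom.mult (I : BagInterp) (f : Var → I.Δ) : QAtom → ℕ∞
  | QAtom.conceptAt A t => I.cI A (termVal I f t)
  | QAtom.roleAt P t₁ t₂ => I.rI P (termVal I f t₁) (termVal I f t₂)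
  | QAtom.eqAt z t => if f z = termVal I f t then 1 else 0

/-- The bag answers `q^I(ā)`: the sum, over all valuations of the variables of `q`
mapping the answer variables to `ā` (valuations are normalized to a fixed junk
value outside the variables of `q`), of the product of the multiplicities of the
atom occurrences of `q`. -/
def CQ.bagAnswer (q : CQ) (I : BagInterp) (a : List Ind) : ℕ∞ :=
  bagSum (fun f : {f : Var → I.Δ //
      (∀ v, v ∉ q.vars → f v = I.indMap 0) ∧
      q.answerVars.map f = a.map I.indMap} =>
    (q.atoms.map (QAtom.mult I f.1)).prod)

/-- Bag certain answers: pointwise minimum over all bag models. -/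
def bagCertain (K : Ontology) (q : CQ) (a : List Ind) : ℕ∞ :=
  ⨅ (I : BagInterp) (_ : I.IsModel K), q.bagAnswer I a

/-- Base relation of the equivalence relation generated by the equality atoms. -/
def CQ.eqBase (q : CQ) : Term → Term → Prop := fun t₁ t₂ =>
  ∃ z t, QAtom.eqAt z t ∈ q.atoms ∧ t₁ = Term.var z ∧ t₂ = t

/-- Equivalence of terms generated by the equality atoms of `q`. -/
def CQ.eqRel (q : CQ) : Term → Term → Prop := Relation.EqvGen q.eqBase

/-- Safety: the class of every variable contains a term occurring in a
non-equality atom. -/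
def CQ.Safe (q : CQ) : Prop :=
  ∀ v ∈ q.vars, ∃ t : Term, ∃ atm ∈ q.atoms,
    (∀ z s, atm ≠ QAtom.eqAt z s) ∧ t ∈ QAtom.terms atm ∧ q.eqRel (Term.var v) t

/-- Well-formedness of CQs: repetition-free disjoint tuples of variables, all
variables of the atoms among the declared variables, and safety. -/
def CQ.WellFormed (q : CQ) : Prop :=
  q.answerVars.Nodup ∧ q.existVars.Nodup ∧
  (∀ v ∈ q.answerVars, v ∉ q.existVars) ∧
  (∀ atm ∈ q.atoms, ∀ v ∈ QAtom.vars atm, v ∈ q.vars) ∧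
  q.Safe

def CQ.mentionsTerm (q : CQ) (t : Term) : Prop := ∃ atm ∈ q.atoms, t ∈ QAtom.terms atm

/-- Adjacency in the Gaifman graph of `q` (on terms; equality atoms merge the
classes of their two terms, which for connectivity purposes is the same as
making them adjacent). -/
def CQ.gaifmanAdj (q : CQ) : Term → Term → Prop := fun t₁ t₂ =>
  ∃ atm ∈ q.atoms, t₁ ∈ QAtom.terms atm ∧ t₂ ∈ QAtom.terms atm

/-- A CQ is rooted if every connected component of its Gaifman graph contains
an answer variable or an individual. -/
def CQ.Rooted (q : CQ) : Prop :=
  ∀ t : Term, q.mentionsTerm t →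
    ∃ t' : Term, Relation.ReflTransGen q.gaifmanAdj t t' ∧
      ((∃ v ∈ q.answerVars, t' = Term.var v) ∨ ∃ a : Ind, t' = Term.ind a)

/- ## Set semantics -/

/-- A classical (set) interpretation. -/
structure SetInterp : Type 1 where
  Δ : Type
  dne : Nonempty Δ
  indMap : Ind → Δ
  indInj : Function.Injective indMap
  cI : AtomicConcept → Set Δ
  rI : AtomicRole → Set (Δ × Δ)

def SetInterp.roleSet (I : SetInterp) : Role → Set (I.Δ × I.Δ)
  | Role.atomic P => I.rI P
  | Role.inv P => {p | (p.2, p.1) ∈ I.rI P}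

def SetInterp.conceptSet (I : SetInterp) : DLConcept → Set I.Δ
  | DLConcept.atomic A => I.cI A
  | DLConcept.ex R => {u | ∃ v, (u, v) ∈ I.roleSet R}

def SetInterp.SatisfiesAx (I : SetInterp) : TBoxAxiom → Prop
  | TBoxAxiom.cIncl C D => I.conceptSet C ⊆ I.conceptSet D
  | TBoxAxiom.rIncl R S => I.roleSet R ⊆ I.roleSet S
  | TBoxAxiom.cDisj C D => I.conceptSet C ∩ I.conceptSet D = ∅
  | TBoxAxiom.rDisj R S => I.roleSet R ∩ I.roleSet S = ∅

def SetInterp.SatisfiesAssertion (I : SetInterp) : Assertion → Prop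
  | Assertion.conceptA A a => I.indMap a ∈ I.cI A
  | Assertion.roleA P a b => (I.indMap a, I.indMap b) ∈ I.rI P

/-- `I` is a (set) model of the TBox `T` and the set ABox `A`. -/
def SetInterp.IsModelOf (I : SetInterp) (T : TBox) (A : Finset Assertion) : Prop :=
  (∀ ax ∈ T, I.SatisfiesAx ax) ∧ ∀ s ∈ A, I.SatisfiesAssertion s

def setTermVal (I : SetInterp) (f : Var → I.Δ) : Term → I.Δ
  | Term.var v => f v
  | Term.ind a => I.indMap a

def SetInterp.SatAtom (I : SetInterp) (f : Var → I.Δ) : QAtom → Prop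
  | QAtom.conceptAt A t => setTermVal I f t ∈ I.cI A
  | QAtom.roleAt P t₁ t₂ => (setTermVal I f t₁, setTermVal I f t₂) ∈ I.rI P
  | QAtom.eqAt z t => f z = setTermVal I f t

/-- `q(ā)` holds in the set interpretation `I`. -/
def SetInterp.SatCQ (I : SetInterp) (q : CQ) (a : List Ind) : Prop :=
  ∃ f : Var → I.Δ, q.answerVars.map f = a.map I.indMap ∧ ∀ atm ∈ q.atoms, I.SatAtom f atm

/-- Entailment of a concept inclusion from a TBox (standard set semantics). -/
def TBox.EntailsCI (T : TBox) (C D : DLConcept) : Prop :=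
  ∀ I : SetInterp, (∀ ax ∈ T, I.SatisfiesAx ax) → I.conceptSet C ⊆ I.conceptSet D

/- ## The canonical bag model -/

/-- Domain elements of the canonical model: individuals and anonymous elements
`w^j_{u,R}`. -/
inductive CanElem where
  | ind : Ind → CanElem
  | anon : CanElem → Role → ℕ → CanElem
  deriving DecidableEq

def CanElem.isAnon : CanElem → Prop
  | CanElem.ind _ => False
  | CanElem.anon _ _ _ => True

/-- A stage of the canonical-model construction: a set of active elements and
bag interpretations of the predicates. -/
structure PreInterp : Type where
  active : Set CanElem
  c : AtomicConcept → CanElem → ℕ∞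
  r : AtomicRole → CanElem → CanElem → ℕ∞

def PreInterp.toInterp (P : PreInterp) : BagInterp where
  Δ := CanElem
  dne := ⟨CanElem.ind 0⟩
  indMap := CanElem.ind
  indInj := fun a b h => by cases h; rfl
  cI := P.c
  rI := P.r

/-- Concept closure: `ccl(u,I,T)(C)` is the supremum of `C₀^I(u)` over all
concepts `C₀` with `T ⊨ C₀ ⊑ C`. -/
def cclI (T : TBox) (I : BagInterp) (C : DLConcept) (u : I.Δ) : ℕ∞ :=
  ⨆ C₀ : {C₀ : DLConcept // TBox.EntailsCI T C₀ C}, I.conceptMult C₀.1 u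

def PreInterp.ccl (P : PreInterp) (T : TBox) (u : CanElem) (C : DLConcept) : ℕ∞ :=
  cclI T P.toInterp C u

/-- `δ = ccl(u,C_{i-1},T)(∃R) − (∃R)^{C_{i-1}}(u)` (truncated subtraction). -/
def PreInterp.delta (P : PreInterp) (T : TBox) (u : CanElem) (R : Role) : ℕ∞ :=
  P.ccl T u (DLConcept.ex R) - P.toInterp.conceptMult (DLConcept.ex R) u

/-- The anonymous elements freshly added when stepping from `P`. -/
def PreInterp.NewAnon (P : PreInterp) (T : TBox) (w : CanElem) : Prop :=
  ∃ u R j, w = CanElem.anon u R j ∧ u ∈ P.active ∧ (j : ℕ∞) < P.delta T u R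

/-- One step of the canonical-model construction. -/
def PreInterp.step (P : PreInterp) (T : TBox) : PreInterp where
  active := P.active ∪ {w | P.NewAnon T w}
  c := fun A u => if u ∈ P.active then P.ccl T u (DLConcept.atomic A) else 0
  r := fun P₀ u v =>
    if u ∈ P.active ∧ v ∈ P.active then P.r P₀ u v
    else if ∃ j, v = CanElem.anon u (Role.atomic P₀) j ∧ P.NewAnon T v then 1
    else if ∃ j, u = CanElem.anon v (Role.inv P₀) j ∧ P.NewAnon T u then 1
    else 0

/-- The stages `C_i(K)` of the canonical bag model. -/
def canStage (K : Ontology) : ℕ → PreInterp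
  | 0 =>
    { active := Set.range CanElem.ind
      c := fun A u =>
        match u with
        | CanElem.ind a => BagABox.mult K.abox (Assertion.conceptA A a)
        | _ => 0
      r := fun P u v =>
        match u, v with
        | CanElem.ind a, CanElem.ind b => BagABox.mult K.abox (Assertion.roleA P a b)
        | _, _ => 0 }
  | (i + 1) => (canStage K i).step K.tbox

/-- The canonical bag model `C(K) = ⋃_{i ≥ 0} C_i(K)` (pointwise maximum). -/
def canInterp (K : Ontology) : BagInterp where
  Δ := CanElem
  dne := ⟨CanElem.ind 0⟩
  indMap := CanElem.ind
  indInj := fun a b h => by cases h; rfl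
  cI := fun A u => ⨆ i, (canStage K i).c A u
  rI := fun P u v => ⨆ i, (canStage K i).r P u v

/-- The canonical bag model `C(⟨∅,A⟩)` of the ontology with empty TBox:
individuals as domain, every predicate interpreted by its ABox bag. -/
def emptyCanInterp (A : BagABox) : BagInterp where
  Δ := Ind
  dne := ⟨0⟩
  indMap := id
  indInj := fun _ _ h => h
  cI := fun C a => BagABox.mult A (Assertion.conceptA C a)
  rI := fun P a b => BagABox.mult A (Assertion.roleA P a b)

/-- `[q,z]^{C(K)}`: bag answers over the canonical model computed only over
valuations sending the variables of `z` to anonymous elements and the remaining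
existential variables to individuals. -/
def CQ.restrictedAnswer (q : CQ) (K : Ontology) (z : Finset Var) (a : List Ind) : ℕ∞ :=
  bagSum (fun f : {f : Var → CanElem //
      (∀ v, v ∉ q.vars → f v = CanElem.ind 0) ∧
      q.answerVars.map f = a.map CanElem.ind ∧
      ∀ v ∈ q.existVars, (v ∈ z → CanElem.isAnon (f v)) ∧ (v ∉ z → ∃ b : Ind, f v = CanElem.ind b)} =>
    (q.atoms.map (QAtom.mult (canInterp K) f.1)).prod)

/- ## Ma-connected subsets, realisability, and the per-`z` rewritten query -/

/-- `t` is a variable belonging to `z`. -/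
def Term.IsZVar (t : Term) (z : Finset Var) : Prop := ∃ v ∈ z, t = Term.var v

/-- Adjacency in the Gaifman graph restricted to nodes that are variables of `z`. -/
def CQ.zAdj (q : CQ) (z : Finset Var) : Term → Term → Prop := fun t₁ t₂ =>
  q.gaifmanAdj t₁ t₂ ∧ t₁.IsZVar z ∧ t₂.IsZVar z

/-- `z'` is maximally connected in the anonymous part (ma-connected) within `z`. -/
def CQ.MAConnected (q : CQ) (z z' : Finset Var) : Prop :=
  z' ⊆ z ∧
  (∀ v ∈ z', ∀ w ∈ z, Relation.ReflTransGen (q.zAdj z) (Term.var v) (Term.var w) → w ∈ z') ∧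
  (∀ v ∈ z', ∀ w ∈ z', Relation.ReflTransGen (q.zAdj z) (Term.var v) (Term.var w))

/-- `φ_{z'}`: the subconjunction of all atoms of `q` mentioning a variable of `z'`. -/
def CQ.subAtoms (q : CQ) (z' : Finset Var) : List QAtom :=
  q.atoms.filter (fun atm => decide (∃ v ∈ z', v ∈ QAtom.vars atm))

def termsOfList (l : List QAtom) : List Term :=
  l.foldr (fun atm acc => QAtom.terms atm ++ acc) []

/-- `t_{z'}`: all terms occurring in `φ_{z'}` that are not variables of `z`. -/
def CQ.tTerms (q : CQ) (z z' : Finset Var) : List Term :=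
  (termsOfList (q.subAtoms z')).filter (fun t => decide (¬ t.IsZVar z))

/-- `atm` is a legitimate choice of `α_{z'}`: an atom of `φ_{z'}` of the form
`P(t,z)` or `P(z,t)` with `z ∈ z'` and the term `t` not a variable of `z`. -/
def IsAlphaFor (q : CQ) (z z' : Finset Var) (atm : QAtom) : Prop :=
  atm ∈ q.subAtoms z' ∧
  ((∃ P t v, v ∈ z' ∧ ¬ Term.IsZVar t z ∧ atm = QAtom.roleAt P t (Term.var v)) ∨
   (∃ P t v, v ∈ z' ∧ ¬ Term.IsZVar t z ∧ atm = QAtom.roleAt P (Term.var v) t))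

def CQ.inds (q : CQ) : List Ind :=
  (termsOfList q.atoms).foldr (fun t acc => t.indsOf ++ acc) []

def CQ.maxInd (q : CQ) : Ind := q.inds.foldr max 0

/-- The individual `a` of `q^a_{z'}`: the individual among `t_{z'}` if one
exists, and a fresh individual otherwise. -/
def freshA (q : CQ) (z z' : Finset Var) : Ind :=
  if h : ∃ c : Ind, Term.ind c ∈ q.tTerms z z' then h.choose else q.maxInd + 1

/-- A fresh individual `b` (distinct from `freshA`). -/
def freshB (q : CQ) : Ind := q.maxInd + 2

/-- The one-assertion bag ABox `A'` used to test realisability: `{P(a,b)}` if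
`α_{z'} = P(t,z)` and `{P(b,a)}` if `α_{z'} = P(z,t)`. -/
def alphaABox (z' : Finset Var) (atm : QAtom) (a b : Ind) : BagABox :=
  match atm with
  | QAtom.roleAt P _ t₂ =>
      if Term.IsZVar t₂ z' then {Assertion.roleA P a b} else {Assertion.roleA P b a}
  | _ => 0

def subVars (q : CQ) (z' : Finset Var) : List Var :=
  (q.subAtoms z').foldr (fun atm acc => QAtom.vars atm ++ acc) []

/-- The bag answer `(q^a_{z'})^{C(⟨T,A'⟩)}(⟨⟩)` of the Boolean query
`q^a_{z'}() = ∃x'.∃z'. φ_{z'} ∧ ⋀_{t ∈ t_{z'}}(t = a) ∧ ⋀_{z ∈ z'}(z ≠ a)`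
over the canonical model of `⟨T,A'⟩`. -/
def realQAnswer (T : TBox) (q : CQ) (z z' : Finset Var) (atm : QAtom) : ℕ∞ :=
  bagSum (fun f : {f : Var → CanElem //
      (∀ v, v ∉ subVars q z' → f v = CanElem.ind 0) ∧
      (∀ t ∈ q.tTerms z z',
        termVal (canInterp ⟨T, alphaABox z' atm (freshA q z z') (freshB q)⟩) f t
          = CanElem.ind (freshA q z z')) ∧
      ∀ v ∈ z', f v ≠ CanElem.ind (freshA q z z')} =>
    ((q.subAtoms z').map
      (QAtom.mult (canInterp ⟨T, alphaABox z' atm (freshA q z z') (freshB q)⟩) f.1)).prod)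

/-- Equality-consistency of `z`: no equality atom `z = t` with `z ∈ z` and `t ∉ z`. -/
def EqConsistent (q : CQ) (z : Finset Var) : Prop :=
  ∀ v t, QAtom.eqAt v t ∈ q.atoms → v ∈ z → Term.IsZVar t z

/-- The ma-connected subset `z'` is realisable by `T` (w.r.t. the chosen `α_{z'}`). -/
def RealisableMA (T : TBox) (q : CQ) (z z' : Finset Var) (atm : QAtom) : Prop :=
  1 ≤ realQAnswer T q z z' atm

/-- `z` is realisable by `T`: equality-consistent and every nonempty
ma-connected subset of `z` is realisable. -/
def RealisableZ (T : TBox) (q : CQ) (z : Finset Var) (alpha : Finset Var → QAtom) : Prop :=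
  EqConsistent q z ∧
  ∀ z' : Finset Var, q.MAConnected z z' → z'.Nonempty → RealisableMA T q z z' (alpha z')

/-- The nonempty ma-connected subsets of `z`. -/
def maSets (q : CQ) (z : Finset Var) : Finset (Finset Var) :=
  z.powerset.filter (fun z' => q.MAConnected z z' ∧ z'.Nonempty)

def tTermVars (q : CQ) (z z' : Finset Var) : List Var :=
  (q.tTerms z z').foldr (fun t acc => Term.varsOf t ++ acc) []

/-- The equalities identifying all the terms of `t_{z'}`. -/
def eqAtomsFor (q : CQ) (z z' : Finset Var) : List QAtom :=
  (tTermVars q z z').foldr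
    (fun v acc => ((q.tTerms z z').map (fun t => QAtom.eqAt v t)) ++ acc) []

/-- Atoms of `q_z`: the atoms of `q` not mentioning a variable of `z`, plus,
for each nonempty ma-connected `z' ⊆ z`, the atom `α_{z'}` together with the
equalities identifying the terms of `t_{z'}`. -/
def qzAtoms (q : CQ) (z : Finset Var) (alpha : Finset Var → QAtom) : List QAtom :=
  q.atoms.filter (fun atm => decide (¬ ∃ v ∈ z, v ∈ QAtom.vars atm))
    ++ (maSets q z).toList.foldr (fun z' acc => alpha z' :: (eqAtomsFor q z z' ++ acc)) []

/-- The CQ `q_z(x) = ∃y'. φ_z(x,y')`. -/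
def qz (q : CQ) (z : Finset Var) (alpha : Finset Var → QAtom) : CQ where
  answerVars := q.answerVars
  existVars := q.existVars.filter (fun v => decide (∃ atm ∈ qzAtoms q z alpha, v ∈ QAtom.vars atm))
  atoms := qzAtoms q z alpha

/- ## The BALG rewriting `q̄` -/

/-- Value of an atom of `q_z` after the rewriting step 3 (`chasing back'' with
the TBox): concept atoms `A(t)` become `⋁_{T ⊨ C ⊑ A} ζ_C(t)`, role atoms with a
`z`-variable become the corresponding truncated difference, and the remaining
atoms are evaluated as before. -/
def rewAtomVal (T : TBox) (I : BagInterp) (z : Finset Var) (f : Var → I.Δ) : QAtom → ℕ∞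
  | QAtom.conceptAt A t => cclI T I (DLConcept.atomic A) (termVal I f t)
  | QAtom.roleAt P t₁ t₂ =>
      if Term.IsZVar t₂ z then
        cclI T I (DLConcept.ex (Role.atomic P)) (termVal I f t₁)
          - I.conceptMult (DLConcept.ex (Role.atomic P)) (termVal I f t₁)
      else if Term.IsZVar t₁ z then
        cclI T I (DLConcept.ex (Role.inv P)) (termVal I f t₂)
          - I.conceptMult (DLConcept.ex (Role.inv P)) (termVal I f t₂)
      else I.rI P (termVal I f t₁) (termVal I f t₂)
  | QAtom.eqAt v t => if f v = termVal I f t then 1 else 0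

/-- Bag answers of the BALG query `q̄_z`, obtained from `q_z` by projecting only
the variables of `y' ∖ z` and replacing atoms as in `rewAtomVal`. -/
def rewAnswer (T : TBox) (qq : CQ) (z : Finset Var) (I : BagInterp) (a : List Ind) : ℕ∞ :=
  bagSum (fun f : {f : Var → I.Δ //
      (∀ v, v ∉ qq.answerVars ++ qq.existVars.filter (fun u => decide (u ∉ z)) →
        f v = I.indMap 0) ∧
      qq.answerVars.map f = a.map I.indMap} =>
    (qq.atoms.map (rewAtomVal T I z f.1)).prod)

/- ## BALG¹_ε queries -/

def Term.fvars (t : Term) : Finset Var :=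
  match t with
  | Term.var v => {v}
  | Term.ind _ => ∅

/-- Syntax of BALG¹_ε queries. -/
inductive BQuery where
  | atomC : AtomicConcept → Term → BQuery
  | atomR : AtomicRole → Term → Term → BQuery
  | conj : BQuery → BQuery → BQuery
  | eqSel : BQuery → Var → Term → BQuery
  | proj : List Var → BQuery → BQuery
  | maxU : BQuery → BQuery → BQuery
  | arithU : BQuery → BQuery → BQuery
  | diff : BQuery → BQuery → BQuery

/-- Answer variables of a BALG¹_ε query. -/
def BQuery.fv : BQuery → Finset Var
  | BQuery.atomC _ t => t.fvars
  | BQuery.atomR _ t₁ t₂ => t₁.fvars ∪ t₂.fvars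
  | BQuery.conj q₁ q₂ => q₁.fv ∪ q₂.fv
  | BQuery.eqSel q _ t => q.fv ∪ t.fvars
  | BQuery.proj ys q => q.fv \ ys.toFinset
  | BQuery.maxU q₁ _ => q₁.fv
  | BQuery.arithU q₁ _ => q₁.fv
  | BQuery.diff q₁ _ => q₁.fv

/-- Well-formedness of BALG¹_ε queries. -/
def BQuery.WF : BQuery → Prop
  | BQuery.atomC _ _ => True
  | BQuery.atomR _ _ _ => True
  | BQuery.conj q₁ q₂ => q₁.WF ∧ q₂.WF
  | BQuery.eqSel q x _ => q.WF ∧ x ∈ q.fv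
  | BQuery.proj _ q => q.WF
  | BQuery.maxU q₁ q₂ => q₁.WF ∧ q₂.WF ∧ q₁.fv = q₂.fv
  | BQuery.arithU q₁ q₂ => q₁.WF ∧ q₂.WF ∧ q₁.fv = q₂.fv
  | BQuery.diff q₁ q₂ => q₁.WF ∧ q₂.WF ∧ q₁.fv = q₂.fv

/-- Semantics of BALG¹_ε queries under a valuation of the answer variables. -/
def BQuery.val (I : BagInterp) : BQuery → (Var → I.Δ) → ℕ∞
  | BQuery.atomC A t, f => I.cI A (termVal I f t)
  | BQuery.atomR P t₁ t₂, f => I.rI P (termVal I f t₁) (termVal I f t₂)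
  | BQuery.conj q₁ q₂, f => q₁.val I f * q₂.val I f
  | BQuery.eqSel q x t, f => if f x = termVal I f t then q.val I f else 0
  | BQuery.proj ys q, f => bagSum (fun g : {g : Var → I.Δ // ∀ v, v ∉ ys → g v = f v} => q.val I g.1)
  | BQuery.maxU q₁ q₂, f => max (q₁.val I f) (q₂.val I f)
  | BQuery.arithU q₁ q₂, f => q₁.val I f + q₂.val I f
  | BQuery.diff q₁ q₂, f => q₁.val I f - q₂.val I f

/-- Bag answers of a BALG¹_ε query with answer variables `xs` on a tuple `a`. -/
def BQuery.answer (Q : BQuery) (xs : List Var) (I : BagInterp) (a : List Ind) : ℕ∞ :=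
  if a.length = xs.length then Q.val I (fun v => I.indMap (a.getD (xs.idxOf v) 0)) else 0

/- ## Enumerated bags, e-homomorphisms, and e-valuations -/

/-- Enumerated copies of a bag of domain elements (for an atomic concept). -/
def EBagC (I : BagInterp) (A : AtomicConcept) : Type :=
  {p : I.Δ × ℕ // 1 ≤ p.2 ∧ (p.2 : ℕ∞) ≤ I.cI A p.1}

/-- Enumerated copies of a bag of pairs (for an atomic role). -/
def EBagR (I : BagInterp) (P : AtomicRole) : Type :=
  {p : (I.Δ × I.Δ) × ℕ // 1 ≤ p.2 ∧ (p.2 : ℕ∞) ≤ I.rI P p.1.1 p.1.2}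

/-- An e-homomorphism between the enumerated versions of two bag interpretations. -/
structure EHom (I J : BagInterp) where
  h : I.Δ → J.Δ
  hInd : ∀ a : Ind, h (I.indMap a) = J.indMap a
  hC : ∀ A : AtomicConcept, EBagC I A → EBagC J A
  hC_fst : ∀ (A : AtomicConcept) (x : EBagC I A), (hC A x).1.1 = h x.1.1
  hR : ∀ P : AtomicRole, EBagR I P → EBagR J P
  hR_fst : ∀ (P : AtomicRole) (x : EBagR I P), (hR P x).1.1 = (h x.1.1.1, h x.1.1.2)

/-- Predicate-injectivity on individuals of an e-homomorphism. -/
def EHom.PredInj {I J : BagInterp} (e : EHom I J) : Prop :=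
  ∀ u : I.Δ, (∃ a : Ind, e.h u = J.indMap a) →
    (∀ A : AtomicConcept, ∀ x y : EBagC I A,
      x.1.1 = u → y.1.1 = u → x.1.2 ≠ y.1.2 → e.hC A x ≠ e.hC A y) ∧
    (∀ P : AtomicRole, ∀ x y : EBagR I P, x.1.1.1 = u → y.1.1.1 = u →
      (x.1.1.2, x.1.2) ≠ (y.1.1.2, y.1.2) → e.hR P x ≠ e.hR P y) ∧
    (∀ P : AtomicRole, ∀ x y : EBagR I P, x.1.1.2 = u → y.1.1.2 = u →
      (x.1.1.1, x.1.2) ≠ (y.1.1.1, y.1.2) → e.hR P x ≠ e.hR P y)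

/-- Enumerated atoms of a CQ (seen as a bag of atoms). -/
def EAtom (q : CQ) : Type := {p : QAtom × ℕ // 1 ≤ p.2 ∧ p.2 ≤ q.atoms.count p.1}

/-- An e-valuation of the enumerated query `q^e` over the enumerated
interpretation `I^e`. -/
structure EVal (q : CQ) (I : BagInterp) where
  ν : Var → I.Δ
  hjunk : ∀ v, v ∉ q.vars → ν v = I.indMap 0
  heq : ∀ z t, QAtom.eqAt z t ∈ q.atoms → ν z = termVal I ν t
  ℓ : EAtom q → ℕ
  hone : ∀ e : EAtom q, 1 ≤ ℓ e
  hconcept : ∀ (e : EAtom q) (A : AtomicConcept) (t : Term),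
    e.1.1 = QAtom.conceptAt A t → (ℓ e : ℕ∞) ≤ I.cI A (termVal I ν t)
  hrole : ∀ (e : EAtom q) (P : AtomicRole) (t₁ t₂ : Term),
    e.1.1 = QAtom.roleAt P t₁ t₂ → (ℓ e : ℕ∞) ≤ I.rI P (termVal I ν t₁) (termVal I ν t₂)
  heqm : ∀ (e : EAtom q) (z : Var) (t : Term), e.1.1 = QAtom.eqAt z t → ℓ e = 1

/-- The tuple of domain elements to which an e-atom is sent by an e-valuation. -/
def EVal.imgTerms {q : CQ} {I : BagInterp} (ev : EVal q I) (e : EAtom q) : List I.Δ :=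
  (QAtom.terms e.1.1).map (termVal I ev.ν)

/-- The enumerated image of an e-atom under an e-valuation. -/
def EVal.img {q : CQ} {I : BagInterp} (ev : EVal q I) (e : EAtom q) : List I.Δ × ℕ :=
  (ev.imgTerms e, ev.ℓ e)

/- ## Auxiliary concrete queries -/

/-- The CQ `ζ_C(x)`: `A(x)`, `∃y.P(x,y)` or `∃y.P(y,x)`. -/
def zetaCQ : DLConcept → CQ
  | DLConcept.atomic A => ⟨[0], [], [QAtom.conceptAt A (Term.var 0)]⟩
  | DLConcept.ex (Role.atomic P) => ⟨[0], [1], [QAtom.roleAt P (Term.var 0) (Term.var 1)]⟩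
  | DLConcept.ex (Role.inv P) => ⟨[0], [1], [QAtom.roleAt P (Term.var 1) (Term.var 0)]⟩

/-- The CQ `q(x) = R(x,x)`. -/
def selfCQ (P : AtomicRole) : CQ := ⟨[0], [], [QAtom.roleAt P (Term.var 0) (Term.var 0)]⟩

/-- A = atomic concept 0, B = atomic concept 1, R = atomic role 0, individuals
a = 0, b = 1.  TBox `{A ⊑ ∃R, ∃R⁻ ⊑ B}`. -/
def tbox7 : TBox :=
  {TBoxAxiom.cIncl (DLConcept.atomic 0) (DLConcept.ex (Role.atomic 0)),
   TBoxAxiom.cIncl (DLConcept.ex (Role.inv 0)) (DLConcept.atomic 1)}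

/-- The rooted CQ `q(x) = ∃y. R(x,y) ∧ B(y)` (x = variable 0, y = variable 1). -/
def q7 : CQ :=
  ⟨[0], [1], [QAtom.roleAt 0 (Term.var 0) (Term.var 1), QAtom.conceptAt 1 (Term.var 1)]⟩

/-- The counterexample bag ABox: `A(a)` with multiplicity 3, `R(a,b)` with
multiplicity 2, `B(b)` with multiplicity 3. -/
def abox7 : BagABox :=
  Multiset.replicate 3 (Assertion.conceptA 0 0)
    + Multiset.replicate 2 (Assertion.roleA 0 0 1)
    + Multiset.replicate 3 (Assertion.conceptA 1 1)

/- ## Helper lemmas for statement 7 -/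

lemma le_bagSum {α : Type*} (f : α → ℕ∞) (s : Finset α) : ∑ x ∈ s, f x ≤ bagSum f :=
  le_iSup (fun s : Finset α => ∑ x ∈ s, f x) s

lemma bagSum_le {α : Type*} {f : α → ℕ∞} {c : ℕ∞}
    (h : ∀ s : Finset α, ∑ x ∈ s, f x ≤ c) : bagSum f ≤ c := iSup_le h

lemma bagSum_eq_of_support {α : Type*} (f : α → ℕ∞) (t0 : Finset α)
    (h : ∀ x ∉ t0, f x = 0) : bagSum f = ∑ x ∈ t0, f x := by
  refine le_antisymm (bagSum_le fun s => ?_) (le_bagSum f t0)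
  calc ∑ x ∈ s, f x = ∑ x ∈ s ∩ t0, f x := by
        refine (Finset.sum_subset Finset.inter_subset_left fun x hx hnx => ?_).symm
        exact h x (fun ht => hnx (Finset.mem_inter.mpr ⟨hx, ht⟩))
    _ ≤ ∑ x ∈ t0, f x := Finset.sum_le_sum_of_subset Finset.inter_subset_right

lemma bagSum_comp_equiv {α β : Type*} (e : α ≃ β) (g : β → ℕ∞) :
    bagSum (fun a => g (e a)) = bagSum g := by
  refine le_antisymm (bagSum_le fun s => ?_) (bagSum_le fun t => ?_)
  · have h : ∑ y ∈ s.image e, g y = ∑ x ∈ s, g (e x) :=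
      Finset.sum_image (fun x _ y _ h => e.injective h)
    rw [← h]; exact le_bagSum g _
  · have h : ∑ x ∈ t.image e.symm, g (e x) = ∑ y ∈ t, g (e (e.symm y)) :=
      Finset.sum_image (fun x _ y _ h => e.symm.injective h)
    simp only [Equiv.apply_symm_apply] at h
    rw [← h]; exact le_bagSum _ _

/-- The valuations relevant for `q7.bagAnswer I [0]` are parametrized by the value of `y`. -/
def q7Equiv (I : BagInterp) : I.Δ ≃ {f : Var → I.Δ //
    (∀ v, v ∉ q7.vars → f v = I.indMap 0) ∧
    q7.answerVars.map f = [0].map I.indMap} where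
  toFun := fun y => ⟨fun v => if v = 1 then y else I.indMap 0, by
    constructor
    · intro v hv
      simp [q7, CQ.vars] at hv
      simp [hv.2]
    · simp [q7]⟩
  invFun := fun f => f.1 1
  left_inv := fun y => by simp
  right_inv := fun f => by
    rcases f with ⟨f, h1, h2⟩
    apply Subtype.ext
    funext v
    by_cases hv1 : v = 1
    · simp [hv1]
    · by_cases hv0 : v = 0
      · simp [q7] at h2
        simp [hv1, hv0, h2]
      · have := h1 v (by simp [q7, CQ.vars, hv0, hv1])
        simp [hv1, this]

lemma q7_answer (I : BagInterp) :
    q7.bagAnswer I [0] = bagSum (fun y : I.Δ => I.rI 0 (I.indMap 0) y * I.cI 1 y) := by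
  rw [CQ.bagAnswer, ← bagSum_comp_equiv (q7Equiv I)]
  congr 1
  funext y
  have hq : ∀ v, (q7Equiv I y).1 v = if v = 1 then y else I.indMap 0 := fun v => rfl
  simp [q7, QAtom.mult, termVal, hq]
  exact rfl

lemma q7_lower (I : BagInterp) (hM : I.IsModel ⟨tbox7, abox7⟩) :
    (7 : ℕ∞) ≤ q7.bagAnswer I [0] := by
  rw [q7_answer]
  have hA : (3:ℕ∞) ≤ I.cI 0 (I.indMap 0) := by
    have := hM.2 (Assertion.conceptA 0 0)
    simpa [BagABox.mult, abox7, BagInterp.assertMult, Multiset.count_add,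
      Multiset.count_replicate] using this
  have hB : (3:ℕ∞) ≤ I.cI 1 (I.indMap 1) := by
    have := hM.2 (Assertion.conceptA 1 1)
    simpa [BagABox.mult, abox7, BagInterp.assertMult, Multiset.count_add,
      Multiset.count_replicate] using this
  have hR : (2:ℕ∞) ≤ I.rI 0 (I.indMap 0) (I.indMap 1) := by
    have := hM.2 (Assertion.roleA 0 0 1)
    simpa [BagABox.mult, abox7, BagInterp.assertMult, Multiset.count_add,
      Multiset.count_replicate] using this
  have hax1 : I.cI 0 (I.indMap 0) ≤ bagSum (fun v => I.rI 0 (I.indMap 0) v) := by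
    have h := hM.1 (TBoxAxiom.cIncl (DLConcept.atomic 0) (DLConcept.ex (Role.atomic 0)))
      (by simp [tbox7])
    simpa [BagInterp.SatisfiesAx, BagInterp.conceptMult, BagInterp.roleMult] using
      h (I.indMap 0)
  have hax2 : ∀ y, I.rI 0 (I.indMap 0) y ≤ I.cI 1 y := by
    intro y
    have h := hM.1 (TBoxAxiom.cIncl (DLConcept.ex (Role.inv 0)) (DLConcept.atomic 1))
      (by simp [tbox7])
    have h2 : bagSum (fun u => I.rI 0 u y) ≤ I.cI 1 y := by
      simpa [BagInterp.SatisfiesAx, BagInterp.conceptMult, BagInterp.roleMult] using h y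
    refine le_trans (le_trans ?_ (le_bagSum (fun u => I.rI 0 u y) {I.indMap 0})) h2
    simp
  by_cases h3 : (3:ℕ∞) ≤ I.rI 0 (I.indMap 0) (I.indMap 1)
  · refine le_trans ?_ (le_bagSum _ {I.indMap 1})
    rw [Finset.sum_singleton]
    calc (7:ℕ∞) ≤ 3 * 3 := by norm_num
      _ ≤ _ := mul_le_mul' h3 hB
  · have hRb : I.rI 0 (I.indMap 0) (I.indMap 1) = 2 := by
      refine le_antisymm (Order.le_of_lt_add_one ?_) hR
      rw [not_le] at h3
      convert h3 using 1
      norm_num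
    have h2lt : (2:ℕ∞) < bagSum (fun v => I.rI 0 (I.indMap 0) v) :=
      lt_of_lt_of_le (by norm_num) (le_trans hA hax1)
    rw [bagSum, lt_iSup_iff] at h2lt
    obtain ⟨s, hs⟩ := h2lt
    have hex : ∃ y ∈ s, y ≠ I.indMap 1 ∧ I.rI 0 (I.indMap 0) y ≠ 0 := by
      by_contra hc
      push_neg at hc
      have hle : ∑ y ∈ s, I.rI 0 (I.indMap 0) y ≤ 2 := by
        calc ∑ y ∈ s, I.rI 0 (I.indMap 0) y
            ≤ ∑ y ∈ s, (if y = I.indMap 1 then (2:ℕ∞) else 0) := by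
              refine Finset.sum_le_sum fun y hy => ?_
              by_cases hyb : y = I.indMap 1
              · simp [hyb, hRb.le]
              · simp [hyb, hc y hy hyb]
          _ ≤ 2 := by
              rw [Finset.sum_ite_eq' s (I.indMap 1) (fun _ => (2:ℕ∞))]
              split <;> simp
      exact absurd hle (not_le.mpr hs)
    obtain ⟨y, hys, hyb, hy0⟩ := hex
    have hy1 : (1:ℕ∞) ≤ I.rI 0 (I.indMap 0) y := ENat.one_le_iff_ne_zero.mpr hy0
    have hcy : (1:ℕ∞) ≤ I.cI 1 y := le_trans hy1 (hax2 y)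
    refine le_trans ?_ (le_bagSum _ {I.indMap 1, y})
    rw [Finset.sum_pair (Ne.symm hyb)]
    have h1 : (6:ℕ∞) ≤ I.rI 0 (I.indMap 0) (I.indMap 1) * I.cI 1 (I.indMap 1) := by
      rw [hRb]
      calc (6:ℕ∞) = 2 * 3 := by norm_num
        _ ≤ _ := mul_le_mul' le_rfl hB
    have h2 : (1:ℕ∞) ≤ I.rI 0 (I.indMap 0) y * I.cI 1 y := by
      calc (1:ℕ∞) = 1 * 1 := by norm_num
        _ ≤ _ := mul_le_mul' hy1 hcy
    calc (7:ℕ∞) = 6 + 1 := by norm_num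
      _ ≤ _ := add_le_add h1 h2

lemma count_abox7_concept (A a : ℕ) :
    Multiset.count (Assertion.conceptA A a) abox7 = 0 ∨
    (((A = 0 ∧ a = 0) ∨ (A = 1 ∧ a = 1)) ∧ Multiset.count (Assertion.conceptA A a) abox7 = 3) := by
  by_cases h1 : A = 0 ∧ a = 0
  · obtain ⟨rfl, rfl⟩ := h1
    exact Or.inr ⟨Or.inl ⟨rfl, rfl⟩, by decide⟩
  · by_cases h2 : A = 1 ∧ a = 1
    · obtain ⟨rfl, rfl⟩ := h2
      exact Or.inr ⟨Or.inr ⟨rfl, rfl⟩, by decide⟩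
    · left
      rw [Multiset.count_eq_zero]
      simp only [abox7, Multiset.mem_add, Multiset.mem_replicate]
      rintro ((⟨-, h⟩ | ⟨-, h⟩) | ⟨-, h⟩)
      · simp only [Assertion.conceptA.injEq] at h; exact h1 h
      · simp at h
      · simp only [Assertion.conceptA.injEq] at h; exact h2 h

lemma count_abox7_role (P a b : ℕ) :
    Multiset.count (Assertion.roleA P a b) abox7 = 0 ∨
    (P = 0 ∧ a = 0 ∧ b = 1 ∧ Multiset.count (Assertion.roleA P a b) abox7 = 2) := by
  by_cases h1 : P = 0 ∧ a = 0 ∧ b = 1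
  · obtain ⟨rfl, rfl, rfl⟩ := h1
    exact Or.inr ⟨rfl, rfl, rfl, by decide⟩
  · left
    rw [Multiset.count_eq_zero]
    simp only [abox7, Multiset.mem_add, Multiset.mem_replicate]
    rintro ((⟨-, h⟩ | ⟨-, h⟩) | ⟨-, h⟩)
    · simp at h
    · simp only [Assertion.roleA.injEq] at h; exact h1 h
    · simp at h

/-- The intended minimal model of `⟨tbox7, abox7⟩`. -/
@[reducible] def model7 : BagInterp where
  Δ := ℕ
  dne := ⟨0⟩
  indMap := id
  indInj := fun _ _ h => h
  cI := fun A u =>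
    if A = 0 ∧ u = 0 then 3 else if A = 1 ∧ u = 1 then 3 else if A = 1 ∧ u = 2 then 1 else 0
  rI := fun P u v =>
    if P = 0 ∧ u = 0 ∧ v = 1 then 2 else if P = 0 ∧ u = 0 ∧ v = 2 then 1 else 0

lemma model7_isModel : model7.IsModel ⟨tbox7, abox7⟩ := by
  constructor
  · intro ax hax
    simp only [tbox7, Finset.mem_insert, Finset.mem_singleton] at hax
    rcases hax with rfl | rfl
    · intro u
      simp only [BagInterp.conceptMult, BagInterp.roleMult]
      by_cases hu : u = (0:ℕ)
      · subst hu
        refine le_trans ?_ (le_bagSum _ ({1, 2} : Finset ℕ))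
        rw [Finset.sum_insert (by decide), Finset.sum_singleton]
        norm_num
      · split_ifs <;> simp_all
    · intro u
      simp only [BagInterp.conceptMult, BagInterp.roleMult]
      apply bagSum_le
      intro s
      refine le_trans (Finset.sum_le_sum
        (g := fun w => if w = (0:ℕ) then
          (if u = (1:ℕ) then (2:ℕ∞) else if u = (2:ℕ) then 1 else 0) else 0)
        fun w _ => ?_) ?_
      · split_ifs <;> simp_all
      · rw [Finset.sum_ite_eq' s (0:ℕ)
          (fun _ => if u = (1:ℕ) then (2:ℕ∞) else if u = (2:ℕ) then 1 else 0)]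
        split_ifs <;> simp_all <;> norm_num
  · intro s
    cases s with
    | conceptA A a =>
      show (↑(Multiset.count (Assertion.conceptA A a) abox7) : ℕ∞) ≤ model7.cI A a
      rcases count_abox7_concept A a with h | ⟨hc, h⟩
      · simp [h]
      · rcases hc with ⟨rfl, rfl⟩ | ⟨rfl, rfl⟩ <;> simp [h]
    | roleA P a b =>
      show (↑(Multiset.count (Assertion.roleA P a b) abox7) : ℕ∞) ≤ model7.rI P a b
      rcases count_abox7_role P a b with h | ⟨rfl, rfl, rfl, h⟩
      · simp [h]
      · simp [h]

lemma q7_upper : q7.bagAnswer model7 [0] = 7 := by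
  rw [q7_answer]
  have hsum : bagSum (fun y => model7.rI 0 (model7.indMap 0) y * model7.cI 1 y)
      = ∑ y ∈ ({1, 2} : Finset ℕ), model7.rI 0 (model7.indMap 0) y * model7.cI 1 y := by
    apply bagSum_eq_of_support
    intro y hy
    simp only [Finset.mem_insert, Finset.mem_singleton, not_or] at hy
    have : model7.rI 0 (model7.indMap 0) y = 0 := by
      simp [hy.1, hy.2]
    rw [this, zero_mul]
  rw [hsum]
  have h1 : (1:ℕ) ∉ ({2} : Finset ℕ) := by decide
  rw [Finset.sum_insert h1, Finset.sum_singleton]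
  have e1 : model7.rI 0 (model7.indMap 0) 1 = 2 := by simp
  have e2 : model7.cI 1 1 = 3 := by simp
  have e3 : model7.rI 0 (model7.indMap 0) 2 = 1 := by simp
  have e4 : model7.cI 1 2 = 1 := by simp
  rw [e1, e2, e3, e4]
  norm_num

lemma bagCertain_q7 : bagCertain ⟨tbox7, abox7⟩ q7 [0] = 7 := by
  refine le_antisymm ?_ (le_iInf fun I => le_iInf fun hM => q7_lower I hM)
  calc bagCertain ⟨tbox7, abox7⟩ q7 [0] ≤ q7.bagAnswer model7 [0] :=
        iInf₂_le model7 model7_isModel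
    _ = 7 := q7_upper


lemma bagSum_ne_seven {α : Type*} {F : α → ℕ∞} {p : ℕ}
    (hp : ∀ x, F x = 0 ∨ F x = (p : ℕ∞)) (hd : ¬ (p ∣ 7)) : bagSum F ≠ 7 := by
  intro h
  have h6 : (6:ℕ∞) < bagSum F := by rw [h]; norm_num
  rw [bagSum, lt_iSup_iff] at h6
  obtain ⟨s, hs⟩ := h6
  have hle : ∑ x ∈ s, F x ≤ 7 := h ▸ le_bagSum F s
  have h7 : ∑ x ∈ s, F x = 7 := by
    have h' := Order.add_one_le_of_lt hs
    rw [show (6:ℕ∞) + 1 = 7 by norm_num] at h'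
    exact le_antisymm hle h'
  set t := s.filter (fun x => F x ≠ 0) with ht
  have hsum : ∑ x ∈ s, F x = ((t.card * p : ℕ) : ℕ∞) := by
    rw [← Finset.sum_filter_ne_zero]
    have hc : ∑ x ∈ t, F x = ∑ _x ∈ t, (p:ℕ∞) := by
      refine Finset.sum_congr rfl fun x hx => ?_
      rcases hp x with h0 | hpx
      · exact absurd h0 (Finset.mem_filter.mp hx).2
      · exact hpx
    rw [hc, Finset.sum_const, nsmul_eq_mul]
    push_cast
    ring
  rw [hsum] at h7
  have hnat : t.card * p = 7 := by exact_mod_cast h7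
  exact hd ⟨t.card, by rw [mul_comm] at hnat; exact hnat.symm⟩

def isRoleAtom : QAtom → Bool
  | QAtom.roleAt _ _ _ => true
  | _ => false

def isConceptAtom : QAtom → Bool
  | QAtom.conceptAt _ _ => true
  | _ => false

lemma prod_mult_cases (f : Var → (emptyCanInterp abox7).Δ) (l : List QAtom) :
    (l.map (QAtom.mult (emptyCanInterp abox7) f)).prod = 0 ∨
    (l.map (QAtom.mult (emptyCanInterp abox7) f)).prod
      = (2:ℕ∞) ^ l.countP isRoleAtom * (3:ℕ∞) ^ l.countP isConceptAtom := by
  induction l with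
  | nil => right; simp
  | cons a l ih =>
    rcases ih with h | h
    · left; rw [List.map_cons, List.prod_cons, h, mul_zero]
    · cases a with
      | conceptAt A t =>
        have hm : QAtom.mult (emptyCanInterp abox7) f (QAtom.conceptAt A t) = 0 ∨
            QAtom.mult (emptyCanInterp abox7) f (QAtom.conceptAt A t) = 3 := by
          show ((Multiset.count (Assertion.conceptA A
            (termVal (emptyCanInterp abox7) f t)) abox7 : ℕ) : ℕ∞) = 0 ∨
            ((Multiset.count (Assertion.conceptA A
            (termVal (emptyCanInterp abox7) f t)) abox7 : ℕ) : ℕ∞) = 3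
          rcases count_abox7_concept A (termVal (emptyCanInterp abox7) f t) with h0 | ⟨-, h3⟩
          · left; rw [h0]; rfl
          · right; rw [h3]; rfl
        rcases hm with h0 | h3
        · left; rw [List.map_cons, List.prod_cons, h0, zero_mul]
        · right
          rw [List.map_cons, List.prod_cons, h3, h, List.countP_cons, List.countP_cons]
          simp only [isRoleAtom, isConceptAtom, cond_true, cond_false]
          norm_num [pow_succ]
          ring
      | roleAt P t1 t2 =>
        have hm : QAtom.mult (emptyCanInterp abox7) f (QAtom.roleAt P t1 t2) = 0 ∨
            QAtom.mult (emptyCanInterp abox7) f (QAtom.roleAt P t1 t2) = 2 := by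
          show ((Multiset.count (Assertion.roleA P
            (termVal (emptyCanInterp abox7) f t1) (termVal (emptyCanInterp abox7) f t2)) abox7 : ℕ) : ℕ∞) = 0 ∨
            ((Multiset.count (Assertion.roleA P
            (termVal (emptyCanInterp abox7) f t1) (termVal (emptyCanInterp abox7) f t2)) abox7 : ℕ) : ℕ∞) = 2
          rcases count_abox7_role P (termVal (emptyCanInterp abox7) f t1)
            (termVal (emptyCanInterp abox7) f t2) with h0 | ⟨-, -, -, h2⟩
          · left; rw [h0]; rfl
          · right; rw [h2]; rfl
        rcases hm with h0 | h2
        · left; rw [List.map_cons, List.prod_cons, h0, zero_mul]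
        · right
          rw [List.map_cons, List.prod_cons, h2, h, List.countP_cons, List.countP_cons]
          simp only [isRoleAtom, isConceptAtom, cond_true, cond_false]
          norm_num [pow_succ]
          ring
      | eqAt z t =>
        by_cases he : f z = termVal (emptyCanInterp abox7) f t
        · right
          have h1 : QAtom.mult (emptyCanInterp abox7) f (QAtom.eqAt z t) = 1 := by
            simp [QAtom.mult, he]
          rw [List.map_cons, List.prod_cons, h1, h, List.countP_cons, List.countP_cons]
          simp [isRoleAtom, isConceptAtom]
        · left
          have h1 : QAtom.mult (emptyCanInterp abox7) f (QAtom.eqAt z t) = 0 := by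
            simp [QAtom.mult, he]
          rw [List.map_cons, List.prod_cons, h1, zero_mul]


lemma q'_ne_seven (q' : CQ) (hwf : q'.WellFormed) (hav : q'.answerVars = [0]) :
    q'.bagAnswer (emptyCanInterp abox7) [0] ≠ 7 := by
  rw [CQ.bagAnswer]
  apply bagSum_ne_seven
    (p := 2 ^ q'.atoms.countP isRoleAtom * 3 ^ q'.atoms.countP isConceptAtom)
  · intro x
    rcases prod_mult_cases x.1 q'.atoms with h | h
    · exact Or.inl h
    · right; rw [h]; push_cast; ring
  · intro hd
    obtain ⟨t, atm, hmem, hne, -, -⟩ := hwf.2.2.2.2 0 (by simp [CQ.vars, hav])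
    cases atm with
    | eqAt z s => exact (hne z s rfl)
    | roleAt P t1 t2 =>
      have hr : 0 < q'.atoms.countP isRoleAtom := List.countP_pos_iff.mpr ⟨_, hmem, rfl⟩
      have h2 : (2:ℕ) ∣ 7 :=
        dvd_trans (dvd_mul_of_dvd_left (dvd_pow_self 2 hr.ne') _) hd
      norm_num at h2
    | conceptAt A t0 =>
      have hc : 0 < q'.atoms.countP isConceptAtom := List.countP_pos_iff.mpr ⟨_, hmem, rfl⟩
      have h3 : (3:ℕ) ∣ 7 :=
        dvd_trans (dvd_mul_of_dvd_right (dvd_pow_self 3 hc.ne') _) hd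
      norm_num at h3

/-- Rooted CQs are not rewritable to max unions of CQs for
DL-Lite_core^bag: for the (core) TBox `tbox7` and the rooted CQ `q7`, for every
max union `q₁ ∨ … ∨ q_n` of CQs the ABox `abox7` is a counterexample:
`⟨tbox7, abox7⟩` is satisfiable and the bag certain answers of `q7` over it
differ from the pointwise maximum of the bag answers of the `q_i` over
`C(⟨∅, abox7⟩)`. -/
theorem statement_7 :
    TBox.IsCore tbox7 ∧ q7.WellFormed ∧ q7.Rooted ∧
    Ontology.Satisfiable ⟨tbox7, abox7⟩ ∧
    ∀ qs : List CQ, qs ≠ [] →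
      (∀ q' ∈ qs, q'.WellFormed ∧ q'.answerVars = q7.answerVars) →
      ∃ a : List Ind,
        bagCertain ⟨tbox7, abox7⟩ q7 a
          ≠ ⨆ q' ∈ qs, q'.bagAnswer (emptyCanInterp abox7) a := by
  refine ⟨?_, ?_, ?_, ⟨model7, model7_isModel⟩, ?_⟩
  · intro ax hax
    simp only [tbox7, Finset.mem_insert, Finset.mem_singleton] at hax
    rcases hax with rfl | rfl
    · exact Or.inl ⟨_, _, rfl⟩
    · exact Or.inl ⟨_, _, rfl⟩
  · refine ⟨by simp [q7], by simp [q7], by simp [q7], ?_, ?_⟩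
    · intro atm hatm v hv
      simp only [q7, List.mem_cons, List.not_mem_nil, or_false] at hatm
      rcases hatm with rfl | rfl <;>
        simp_all [QAtom.vars, Term.varsOf, CQ.vars, q7] <;> tauto
    · intro v hv
      simp only [q7, CQ.vars, List.mem_append, List.mem_singleton] at hv
      rcases hv with rfl | rfl
      · exact ⟨Term.var 0, QAtom.roleAt 0 (Term.var 0) (Term.var 1), by simp [q7],
          fun z s => by simp, by simp [QAtom.terms], Relation.EqvGen.refl _⟩
      · exact ⟨Term.var 1, QAtom.roleAt 0 (Term.var 0) (Term.var 1), by simp [q7],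
          fun z s => by simp, by simp [QAtom.terms], Relation.EqvGen.refl _⟩
  · intro t ht
    obtain ⟨atm, hatm, hterm⟩ := ht
    simp only [q7, List.mem_cons, List.not_mem_nil, or_false] at hatm
    have hadj : q7.gaifmanAdj (Term.var 1) (Term.var 0) :=
      ⟨QAtom.roleAt 0 (Term.var 0) (Term.var 1), by simp [q7], by simp [QAtom.terms],
        by simp [QAtom.terms]⟩
    have h0 : ∃ v ∈ q7.answerVars, Term.var 0 = Term.var v := ⟨0, by simp [q7], rfl⟩
    rcases hatm with rfl | rfl
    · simp only [QAtom.terms, List.mem_cons, List.not_mem_nil, or_false] at hterm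
      rcases hterm with rfl | rfl
      · exact ⟨Term.var 0, Relation.ReflTransGen.refl, Or.inl h0⟩
      · exact ⟨Term.var 0, Relation.ReflTransGen.single hadj, Or.inl h0⟩
    · simp only [QAtom.terms, List.mem_cons, List.not_mem_nil, or_false] at hterm
      rcases hterm with rfl
      exact ⟨Term.var 0, Relation.ReflTransGen.single hadj, Or.inl h0⟩
  · intro qs _ hq
    refine ⟨[0], ?_⟩
    rw [bagCertain_q7]
    intro hsup
    have h6 : (6:ℕ∞) < ⨆ q' ∈ qs, q'.bagAnswer (emptyCanInterp abox7) [0] := by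
      rw [← hsup]; norm_num
    rw [lt_iSup_iff] at h6
    obtain ⟨q', hq'⟩ := h6
    rw [lt_iSup_iff] at hq'
    obtain ⟨hmem, hlt⟩ := hq'
    have hle : q'.bagAnswer (emptyCanInterp abox7) [0] ≤ 7 := by
      rw [hsup]
      exact le_iSup₂ (f := fun (q'' : CQ) (_ : q'' ∈ qs) =>
        q''.bagAnswer (emptyCanInterp abox7) [0]) q' hmem
    have heq : q'.bagAnswer (emptyCanInterp abox7) [0] = 7 := by
      refine le_antisymm hle ?_
      have h' := Order.add_one_le_of_lt hlt
      rwa [show (6:ℕ∞) + 1 = 7 by norm_num] at h'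
    exact q'_ne_seven q' (hq q' hmem).1 (hq q' hmem).2 heq
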